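/- Let p, q be unit quaternions and let Z, Z′ be tangent vectors to S³×S³ at (p,q). Then: (i) P(PZ) = Z; (ii) P(JZ) = −J(PZ); (iii) g(PZ, PZ′) = g(Z, Z′); (iv) g(PZ, Z′) = g(Z, PZ′). -/

import Mathlib

noncomputable section

open Quaternion

/-- Euclidean inner product on the quaternions: `⟨x,y⟩ = Re (x * star y)`. -/
def ipQ (x y : ℍ[ℝ]) : ℝ := (x * star y).re

/-- Euclidean inner product on pairs of quaternions. -/
def ip2Q (Z W : ℍ[ℝ] × ℍ[ℝ]) : ℝ := ipQ Z.1 W.1 + ipQ Z.2 W.2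

/-- The almost complex structure `J` of the nearly Kähler `S³ × S³` at `(p,q)`:
`J(U,V) = (1/√3)(2pq⁻¹V − U, −2qp⁻¹U + V)`. -/
def Jmap (p q : ℍ[ℝ]) (Z : ℍ[ℝ] × ℍ[ℝ]) : ℍ[ℝ] × ℍ[ℝ] :=
  ((Real.sqrt 3)⁻¹ • ((2 : ℝ) • (p * q⁻¹ * Z.2) - Z.1),
   (Real.sqrt 3)⁻¹ • (-((2 : ℝ) • (q * p⁻¹ * Z.1)) + Z.2))

/-- The nearly Kähler metric `g(Z,Z') = ½(⟨Z,Z'⟩ + ⟨JZ,JZ'⟩)`. -/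
def gmet (p q : ℍ[ℝ]) (Z W : ℍ[ℝ] × ℍ[ℝ]) : ℝ :=
  (1 / 2) * (ip2Q Z W + ip2Q (Jmap p q Z) (Jmap p q W))

/-- The almost product structure `P(U,V) = (pq⁻¹V, qp⁻¹U)`. -/
def Pmap (p q : ℍ[ℝ]) (Z : ℍ[ℝ] × ℍ[ℝ]) : ℍ[ℝ] × ℍ[ℝ] :=
  (p * q⁻¹ * Z.2, q * p⁻¹ * Z.1)

/-- The usual product structure `Q(U,V) = (−U, V)`. -/
def Qmap (Z : ℍ[ℝ] × ℍ[ℝ]) : ℍ[ℝ] × ℍ[ℝ] := (-Z.1, Z.2)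

/-- Cross product of (imaginary) quaternions: `α × β = ½(αβ − βα)`. -/
def crossQ (a b : ℍ[ℝ]) : ℍ[ℝ] := (1 / 2 : ℝ) • (a * b - b * a)

/-- The tensor `G = ∇̃J` at `(p,q)`, evaluated on tangent vectors `X = (pα, qβ)`,
`Y = (pγ, qδ)` (so `α = p⁻¹X₁`, etc.):
`G(X,Y) = (2/(3√3))(p(β×γ + α×δ + α×γ − 2β×δ), q(−α×δ − β×γ + 2α×γ − β×δ))`. -/
def Gmap (p q : ℍ[ℝ]) (X Y : ℍ[ℝ] × ℍ[ℝ]) : ℍ[ℝ] × ℍ[ℝ] :=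
  (2 / (3 * Real.sqrt 3) : ℝ) •
    ((p * (crossQ (q⁻¹ * X.2) (p⁻¹ * Y.1) + crossQ (p⁻¹ * X.1) (q⁻¹ * Y.2)
        + crossQ (p⁻¹ * X.1) (p⁻¹ * Y.1) - (2 : ℝ) • crossQ (q⁻¹ * X.2) (q⁻¹ * Y.2)),
      q * (-(crossQ (p⁻¹ * X.1) (q⁻¹ * Y.2)) - crossQ (q⁻¹ * X.2) (p⁻¹ * Y.1)
        + (2 : ℝ) • crossQ (p⁻¹ * X.1) (p⁻¹ * Y.1) - crossQ (q⁻¹ * X.2) (q⁻¹ * Y.2))))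

/- ### Auxiliary lemmas -/

lemma inv_eq_star' {p : ℍ[ℝ]} (hp : ‖p‖ = 1) : p⁻¹ = star p := by
  have : normSq p = 1 := by rw [normSq_eq_norm_mul_self, hp]; ring
  rw [Quaternion.inv_def, this]; simp

lemma reQ_mul_comm (x y : ℍ[ℝ]) : (x*y).re = (y*x).re := by
  simp [Quaternion.re_mul]; ring

lemma ipQ_add_left (x y z : ℍ[ℝ]) : ipQ (x+y) z = ipQ x z + ipQ y z := by
  simp [ipQ, add_mul]
lemma ipQ_add_right (x y z : ℍ[ℝ]) : ipQ x (y+z) = ipQ x y + ipQ x z := by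
  simp [ipQ, mul_add]
lemma ipQ_sub_left (x y z : ℍ[ℝ]) : ipQ (x-y) z = ipQ x z - ipQ y z := by
  simp [ipQ, sub_mul]
lemma ipQ_sub_right (x y z : ℍ[ℝ]) : ipQ x (y-z) = ipQ x y - ipQ x z := by
  simp [ipQ, mul_sub]
lemma ipQ_neg_left (x z : ℍ[ℝ]) : ipQ (-x) z = - ipQ x z := by simp [ipQ]
lemma ipQ_neg_right (x z : ℍ[ℝ]) : ipQ x (-z) = - ipQ x z := by simp [ipQ]
lemma ipQ_smul_left (r : ℝ) (x z : ℍ[ℝ]) : ipQ (r • x) z = r * ipQ x z := by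
  simp [ipQ, smul_mul_assoc]
lemma ipQ_smul_right (r : ℝ) (x z : ℍ[ℝ]) : ipQ x (r • z) = r * ipQ x z := by
  simp [ipQ, mul_smul_comm]

lemma ipQ_unit_mul {u : ℍ[ℝ]} (hu : ‖u‖ = 1) (x y : ℍ[ℝ]) :
    ipQ (u*x) (u*y) = ipQ x y := by
  have h1 : star u * u = 1 := by
    rw [star_mul_self, normSq_eq_norm_mul_self, hu]; norm_num
  calc (u*x*star (u*y)).re = (u * (x * star y * star u)).re := by
        rw [star_mul]; simp [mul_assoc]
      _ = (x * star y * (star u * u)).re := by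
        rw [reQ_mul_comm]; simp [mul_assoc]
      _ = ipQ x y := by rw [h1, mul_one]; rfl

lemma ipQ_shift {a b : ℍ[ℝ]} (h : star b = a) (x y : ℍ[ℝ]) :
    ipQ (b*x) y = ipQ x (a*y) := by
  calc (b*x*star y).re = (x * star y * b).re := by rw [mul_assoc, reQ_mul_comm]
    _ = (x * star (a*y)).re := by rw [star_mul, ← h, star_star, mul_assoc]

lemma mul_cancel_assoc {a b : ℍ[ℝ]} (h : a * b = 1) (x : ℍ[ℝ]) :
    a * (b * x) = x := by rw [← mul_assoc, h, one_mul]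

lemma gmet_eq (p q : ℍ[ℝ]) (hp : ‖p‖ = 1) (hq : ‖q‖ = 1) (Z W : ℍ[ℝ] × ℍ[ℝ]) :
    gmet p q Z W = (8 * ipQ Z.1 W.1 + 8 * ipQ Z.2 W.2
      - 4 * ipQ Z.1 ((p * star q) * W.2) - 4 * ipQ ((p * star q) * Z.2) W.1) / 6 := by
  have hp' := inv_eq_star' hp
  have hq' := inv_eq_star' hq
  have ha : ‖p * star q‖ = 1 := by rw [norm_mul, norm_star, hp, hq]; ring
  have hb : ‖q * star p‖ = 1 := by rw [norm_mul, norm_star, hp, hq]; ring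
  have hsb : star (q * star p) = p * star q := by rw [star_mul, star_star]
  have hsa : star (p * star q) = q * star p := by rw [star_mul, star_star]
  have hs : (Real.sqrt 3)⁻¹ * (Real.sqrt 3)⁻¹ = 1/3 := by
    rw [← mul_inv, Real.mul_self_sqrt (by norm_num)]; norm_num
  unfold gmet ip2Q Jmap
  rw [hp', hq']
  simp only [ipQ_smul_left, ipQ_smul_right, ipQ_sub_left, ipQ_sub_right,
    ipQ_add_left, ipQ_add_right, ipQ_neg_left, ipQ_neg_right]
  rw [ipQ_unit_mul ha, ipQ_unit_mul hb, ipQ_shift hsb Z.1 W.2,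
    ← ipQ_shift hsa Z.2 W.1]
  linear_combination ((5 * ipQ Z.1 W.1 + 5 * ipQ Z.2 W.2
    - 4 * ipQ Z.1 ((p * star q) * W.2) - 4 * ipQ ((p * star q) * Z.2) W.1) / 2) * hs

/-- `P` is involutive, anti-commutes with `J`, is compatible with `g`
and is symmetric. -/
theorem stmt2 (p q : ℍ[ℝ]) (hp : ‖p‖ = 1) (hq : ‖q‖ = 1)
    (Z Z' : ℍ[ℝ] × ℍ[ℝ]) (hZ1 : ipQ Z.1 p = 0) (hZ2 : ipQ Z.2 q = 0)
    (hZ'1 : ipQ Z'.1 p = 0) (hZ'2 : ipQ Z'.2 q = 0) :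
    Pmap p q (Pmap p q Z) = Z ∧
    Pmap p q (Jmap p q Z) = -(Jmap p q (Pmap p q Z)) ∧
    gmet p q (Pmap p q Z) (Pmap p q Z') = gmet p q Z Z' ∧
    gmet p q (Pmap p q Z) Z' = gmet p q Z (Pmap p q Z') := by
  have hp' := inv_eq_star' hp
  have hq' := inv_eq_star' hq
  have hpp : star p * p = 1 := by
    rw [star_mul_self, normSq_eq_norm_mul_self, hp]; norm_num
  have hqq : star q * q = 1 := by
    rw [star_mul_self, normSq_eq_norm_mul_self, hq]; norm_num
  have hp2 : p * star p = 1 := by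
    rw [self_mul_star, normSq_eq_norm_mul_self, hp]; norm_num
  have hq2 : q * star q = 1 := by
    rw [self_mul_star, normSq_eq_norm_mul_self, hq]; norm_num
  have hab : (p * star q) * (q * star p) = 1 := by
    simp only [mul_assoc]; rw [← mul_assoc (star q) q, hqq, one_mul, hp2]
  have hba : (q * star p) * (p * star q) = 1 := by
    simp only [mul_assoc]; rw [← mul_assoc (star p) p, hpp, one_mul, hq2]
  have ha : ‖p * star q‖ = 1 := by rw [norm_mul, norm_star, hp, hq]; ring
  have hb : ‖q * star p‖ = 1 := by rw [norm_mul, norm_star, hp, hq]; ring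
  have hsb : star (q * star p) = p * star q := by rw [star_mul, star_star]
  have hsa : star (p * star q) = q * star p := by rw [star_mul, star_star]
  refine ⟨?_, ?_, ?_, ?_⟩
  · simp only [Pmap, hp', hq']
    exact Prod.ext (mul_cancel_assoc hab Z.1) (mul_cancel_assoc hba Z.2)
  · simp only [Pmap, Jmap, hp', hq']
    refine Prod.ext ?_ ?_ <;>
      simp only [mul_smul_comm, mul_add, mul_sub, mul_neg,
        mul_cancel_assoc hab, mul_cancel_assoc hba, smul_neg, smul_sub, smul_add,
        neg_neg, neg_add_rev, neg_sub, Prod.neg_mk] <;> abel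
  · rw [gmet_eq p q hp hq, gmet_eq p q hp hq]
    simp only [Pmap, hp', hq']
    rw [mul_cancel_assoc hab, mul_cancel_assoc hab,
      ipQ_unit_mul ha, ipQ_unit_mul hb]
    ring
  · rw [gmet_eq p q hp hq, gmet_eq p q hp hq]
    simp only [Pmap, hp', hq']
    rw [mul_cancel_assoc hab, mul_cancel_assoc hab,
      ipQ_unit_mul ha, ipQ_shift hsb Z.1 Z'.2, ← ipQ_shift hsa Z.2 Z'.1]
    ring
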